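/- arXiv:1005.3550 — 5 statements merged into one kernel-verified Lean document; each statement's English description precedes it below -/
import Mathlib

section
/- Let S₁ = K⟨x,y | yx=1⟩ and λ ∈ K with λ ≠ -1. Then in the 2×2 matrix ring M₂(S₁) the identity [[1,0],[-(1+λ)^{-1}y,1]] · [[1,λx],[0,1]] · [[1,0],[y,1]] · [[1,-λ(1+λ)^{-1}x],[0,1]] = [[1+λ,0],[0,(1+λ)^{-1}]] · [[1-λ(1+λ)^{-1}E₀₀,0],[0,1]] holds, where E₀₀ := 1 - xy. -/
/-- In `M₂(S₁)`, where `S₁ = K⟨x,y | yx = 1⟩` and `E₀₀ = 1 - xy`, for `λ ∈ K`, `λ ≠ -1`: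
`[[1,0],[-(1+λ)⁻¹y,1]]·[[1,λx],[0,1]]·[[1,0],[y,1]]·[[1,-λ(1+λ)⁻¹x],[0,1]]
  = [[1+λ,0],[0,(1+λ)⁻¹]]·[[1-λ(1+λ)⁻¹E₀₀,0],[0,1]]`. -/
theorem elementary_matrix_identity_S1 {K A : Type*} [Field K] [Ring A] [Algebra K A]
    (x y : A) (h : y * x = 1) (lam : K) (hlam : lam ≠ -1) :
    (!![1, 0; -(((1 + lam)⁻¹ : K) • y), 1] * !![1, lam • x; 0, 1] *
        !![1, 0; y, 1] * !![1, -((lam * (1 + lam)⁻¹ : K) • x); 0, 1]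
      : Matrix (Fin 2) (Fin 2) A) =
    !![algebraMap K A (1 + lam), 0; 0, algebraMap K A (1 + lam)⁻¹] *
      !![1 - (lam * (1 + lam)⁻¹ : K) • (1 - x * y), 0; 0, 1] := by
  have hne : (1 + lam) ≠ 0 := fun h0 => hlam (by linear_combination h0)
  have hu : (1 + lam) * (1 + lam)⁻¹ = 1 := mul_inv_cancel₀ hne
  generalize (1 + lam)⁻¹ = u at *
  ext i j
  fin_cases i <;> fin_cases j <;>
    · simp [Matrix.mul_apply, Fin.sum_univ_succ, Algebra.algebraMap_eq_smul_one,
        smul_mul_assoc, mul_smul_comm, smul_smul, h, sub_mul, mul_sub, smul_sub,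
        mul_assoc, add_mul, mul_add, neg_mul, mul_neg]
      match_scalars
      all_goals
        first
          | ring1
          | linear_combination lam * hu
          | linear_combination (-lam) * hu
          | linear_combination -hu
          | linear_combination (lam * u - 1) * hu
end

section
/- Let Λ be a ring containing a division ring D and an idempotent e commuting with D, Λ = D ⊕ De, and let S₁(Λ) = Λ⟨x,y | yx=1⟩ with x, y commuting with Λ. For each λ ∈ D with λ ≠ -1, the identity [[1,0],[-(1+λe)^{-1}y,1]]·[[1,λex],[0,1]]·[[1,0],[y,1]]·[[1,-(1+λe)^{-1}λex],[0,1]] = [[1+λe,0],[0,(1+λe)^{-1}]]·[[1-(1+λ)^{-1}λeE₀₀,0],[0,1]] holds in M₂(S₁(Λ)), where E₀₀ = 1 - xy and (1+λe)^{-1} = 1 - (1+λ)^{-1}λe. -/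
section
variable {A : Type*} [Ring A]

set_option maxHeartbeats 1000000 in
theorem aux_mat (E a b x y : A)
    (hE : E * E = E) (haE : a * E = E * a) (hbE : b * E = E * b)
    (hab : a * b = b * a) (hkey : b + b * a = a)
    (hxE : E * x = x * E) (hyE : E * y = y * E)
    (hxa : a * x = x * a) (hya : a * y = y * a)
    (hxb : b * x = x * b) (hyb : b * y = y * b)
    (h : y * x = 1) :
    (!![1, 0; -((1 - b * E) * y), 1] * !![1, a * E * x; 0, 1] * !![1, 0; y, 1] *
        !![1, -((1 - b * E) * (a * E) * x); 0, 1] : Matrix (Fin 2) (Fin 2) A) =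
    !![1 + a * E, 0; 0, 1 - b * E] * !![1 - b * E * (1 - x * y), 0; 0, 1] := by
  have hba : b * a = a - b := eq_sub_of_add_eq' hkey
  have hab' : a * b = a - b := hab.trans hba
  have s1 : ∀ z : A, x * (a * z) = a * (x * z) := fun z => by rw [← mul_assoc, ← hxa, mul_assoc]
  have s2 : ∀ z : A, x * (b * z) = b * (x * z) := fun z => by rw [← mul_assoc, ← hxb, mul_assoc]
  have s3 : ∀ z : A, x * (E * z) = E * (x * z) := fun z => by rw [← mul_assoc, ← hxE, mul_assoc]
  have s4 : ∀ z : A, y * (a * z) = a * (y * z) := fun z => by rw [← mul_assoc, ← hya, mul_assoc]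
  have s5 : ∀ z : A, y * (b * z) = b * (y * z) := fun z => by rw [← mul_assoc, ← hyb, mul_assoc]
  have s6 : ∀ z : A, y * (E * z) = E * (y * z) := fun z => by rw [← mul_assoc, ← hyE, mul_assoc]
  have s7 : ∀ z : A, E * (a * z) = a * (E * z) := fun z => by rw [← mul_assoc, ← haE, mul_assoc]
  have s8 : ∀ z : A, E * (b * z) = b * (E * z) := fun z => by rw [← mul_assoc, ← hbE, mul_assoc]
  have s9 : ∀ z : A, E * (E * z) = E * z := fun z => by rw [← mul_assoc, hE]
  have s10 : ∀ z : A, y * (x * z) = z := fun z => by rw [← mul_assoc, h, one_mul]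
  have s11 : ∀ z : A, a * (b * z) = a * z - b * z := fun z => by
    rw [← mul_assoc, hab', sub_mul]
  have s12 : ∀ z : A, b * (a * z) = a * z - b * z := fun z => by
    rw [← mul_assoc, hba, sub_mul]
  have t00 : 1 + a * E * x * y = (1 + a * E) * (1 - b * E * (1 - x * y)) := by
    simp only [mul_assoc, mul_one, one_mul, mul_sub, sub_mul, mul_add, add_mul, mul_neg,
      neg_mul, neg_neg, s1, s2, s3, s4, s5, s6, s7, s8, s9, s10, s11, s12, h, hE,
      ← haE, ← hbE, ← hxa, ← hxb, ← hxE, ← hya, ← hyb, ← hyE, hab', hba,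
      mul_zero, zero_mul, add_zero, zero_add]
    abel
  have t01 : -((1 + a * E * x * y) * ((1 - b * E) * (a * E) * x)) + a * E * x = 0 := by
    simp only [mul_assoc, mul_one, one_mul, mul_sub, sub_mul, mul_add, add_mul, mul_neg,
      neg_mul, neg_neg, s1, s2, s3, s4, s5, s6, s7, s8, s9, s10, s11, s12, h, hE,
      ← haE, ← hbE, ← hxa, ← hxb, ← hxE, ← hya, ← hyb, ← hyE, hab', hba,
      mul_zero, zero_mul, add_zero, zero_add]
    abel
  have t10 : -((1 - b * E) * y) + (-((1 - b * E) * y * (a * E * x)) + 1) * y = 0 := by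
    simp only [mul_assoc, mul_one, one_mul, mul_sub, sub_mul, mul_add, add_mul, mul_neg,
      neg_mul, neg_neg, s1, s2, s3, s4, s5, s6, s7, s8, s9, s10, s11, s12, h, hE,
      ← haE, ← hbE, ← hxa, ← hxb, ← hxE, ← hya, ← hyb, ← hyE, hab', hba,
      mul_zero, zero_mul, add_zero, zero_add]
    abel
  have t11 : -((-((1 - b * E) * y) + (-((1 - b * E) * y * (a * E * x)) + 1) * y) *
        ((1 - b * E) * (a * E) * x)) + (-((1 - b * E) * y * (a * E * x)) + 1) = 1 - b * E := by
    rw [t10]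
    simp only [zero_mul, neg_zero, zero_add]
    simp only [mul_assoc, mul_one, one_mul, mul_sub, sub_mul, mul_add, add_mul, mul_neg,
      neg_mul, neg_neg, s1, s2, s3, s4, s5, s6, s7, s8, s9, s10, s11, s12, h, hE,
      ← haE, ← hbE, ← hxa, ← hxb, ← hxE, ← hya, ← hyb, ← hyE, hab', hba,
      mul_zero, zero_mul, add_zero, zero_add]
    abel
  ext i j
  fin_cases i <;> fin_cases j <;>
    simp [Matrix.mul_apply, Fin.sum_univ_two]
  exacts [t00, t01, t10, t11]

end

/-- Let `D` be a division ring, `Λ = D ⊕ De` with `e² = e` and `e` commuting with `D`, and let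
`S₁(Λ) = Λ⟨x,y | yx = 1⟩` with `x, y` commuting with `Λ`. For `λ ∈ D`, `λ ≠ -1`, writing
`(1+λe)⁻¹ = 1 - (1+λ)⁻¹λe`, the identity
`[[1,0],[-(1+λe)⁻¹y,1]]·[[1,λex],[0,1]]·[[1,0],[y,1]]·[[1,-(1+λe)⁻¹λex],[0,1]]
  = [[1+λe,0],[0,(1+λe)⁻¹]]·[[1-(1+λ)⁻¹λeE₀₀,0],[0,1]]` holds in `M₂(S₁(Λ))`,
where `E₀₀ = 1 - xy`. -/
theorem elementary_matrix_identity_S1_Lambda {D L A : Type*} [DivisionRing D] [Ring L] [Ring A]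
    (f : D →+* L) (e : L) (he : e * e = e) (hc : ∀ d : D, f d * e = e * f d)
    (hspan : ∀ l : L, ∃! p : D × D, l = f p.1 + f p.2 * e)
    (g : L →+* A) (x y : A) (h : y * x = 1)
    (hx : ∀ l : L, g l * x = x * g l) (hy : ∀ l : L, g l * y = y * g l)
    (lam : D) (hlam : lam ≠ -1) :
    (!![1, 0; -((1 - g (f ((1 + lam)⁻¹ * lam)) * g e) * y), 1] *
        !![1, g (f lam) * g e * x; 0, 1] * !![1, 0; y, 1] *
        !![1, -((1 - g (f ((1 + lam)⁻¹ * lam)) * g e) * (g (f lam) * g e) * x); 0, 1]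
      : Matrix (Fin 2) (Fin 2) A) =
    !![1 + g (f lam) * g e, 0; 0, 1 - g (f ((1 + lam)⁻¹ * lam)) * g e] *
      !![1 - g (f ((1 + lam)⁻¹ * lam)) * g e * (1 - x * y), 0; 0, 1] := by
  have h0 : (1 : D) + lam ≠ 0 := fun h0 => hlam (eq_neg_of_add_eq_zero_right h0)
  have hc1 : Commute lam (1 + lam) := ((Commute.one_right lam).add_right (Commute.refl lam))
  have hc2 : Commute lam (1 + lam)⁻¹ := hc1.inv_right₀
  have hkeyD : (1 + lam)⁻¹ * lam + (1 + lam)⁻¹ * lam * lam = lam := by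
    rw [mul_assoc, ← mul_add, show lam + lam * lam = (1 + lam) * lam by rw [add_mul, one_mul],
      ← mul_assoc, inv_mul_cancel₀ h0, one_mul]
  have hcommD : lam * ((1 + lam)⁻¹ * lam) = ((1 + lam)⁻¹ * lam) * lam := by
    rw [← mul_assoc, hc2.eq, mul_assoc]
  exact aux_mat (g e) (g (f lam)) (g (f ((1 + lam)⁻¹ * lam))) x y
    (by rw [← map_mul, he])
    (by rw [← map_mul, ← map_mul, hc lam])
    (by rw [← map_mul, ← map_mul, hc ((1 + lam)⁻¹ * lam)])
    (by rw [← map_mul, ← map_mul, ← map_mul, ← map_mul, hcommD])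
    (by rw [← map_mul, ← map_mul, ← map_add, ← map_add, hkeyD])
    (hx e) (hy e) (hx (f lam)) (hy (f lam)) (hx (f ((1 + lam)⁻¹ * lam))) (hy (f ((1 + lam)⁻¹ * lam)))
    h
end

section
/- Let S₂ = K⟨x₁,y₁,x₂,y₂⟩ subject to y₁x₁ = 1, y₂x₂ = 1, and the pairs (x₁,y₁) and (x₂,y₂) pairwise commute. Set e₂ := 1 - x₂y₂. Then the matrix identity [[1,0],[-x₂y₁,1]]·[[1,(y₂-1)x₁],[0,1]]·[[1,0],[y₁,1]]·[[1,-(y₂-1)x₁],[0,1]]·[[1,(y₂-1)(1-x₂)x₁],[0,1]] = [[1+(y₂-1)x₁y₁,0],[e₂y₁,x₂]] holds in M₂(S₂). -/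
/-- In `M₂(S₂)`, where `S₂ = K⟨x₁,y₁,x₂,y₂ | y₁x₁ = 1, y₂x₂ = 1, cross-commutation⟩` and
`e₂ = 1 - x₂y₂`:
`[[1,0],[-x₂y₁,1]]·[[1,(y₂-1)x₁],[0,1]]·[[1,0],[y₁,1]]·[[1,-(y₂-1)x₁],[0,1]]·
 [[1,(y₂-1)(1-x₂)x₁],[0,1]] = [[1+(y₂-1)x₁y₁,0],[e₂y₁,x₂]]`. -/
theorem five_matrix_identity_S2 {K A : Type*} [Field K] [Ring A] [Algebra K A]
    (x₁ y₁ x₂ y₂ : A) (h1 : y₁ * x₁ = 1) (h2 : y₂ * x₂ = 1)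
    (c1 : x₁ * x₂ = x₂ * x₁) (c2 : x₁ * y₂ = y₂ * x₁)
    (c3 : y₁ * x₂ = x₂ * y₁) (c4 : y₁ * y₂ = y₂ * y₁) :
    (!![1, 0; -(x₂ * y₁), 1] * !![1, (y₂ - 1) * x₁; 0, 1] * !![1, 0; y₁, 1] *
        !![1, -((y₂ - 1) * x₁); 0, 1] * !![1, (y₂ - 1) * (1 - x₂) * x₁; 0, 1]
      : Matrix (Fin 2) (Fin 2) A) =
    !![1 + (y₂ - 1) * x₁ * y₁, 0; (1 - x₂ * y₂) * y₁, x₂] := by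
  have h1' : ∀ z : A, y₁ * (x₁ * z) = z := fun z => by rw [← mul_assoc, h1, one_mul]
  have h2' : ∀ z : A, y₂ * (x₂ * z) = z := fun z => by rw [← mul_assoc, h2, one_mul]
  have c1' : ∀ z : A, x₁ * (x₂ * z) = x₂ * (x₁ * z) := fun z => by
    rw [← mul_assoc, c1, mul_assoc]
  have c2' : ∀ z : A, x₁ * (y₂ * z) = y₂ * (x₁ * z) := fun z => by
    rw [← mul_assoc, c2, mul_assoc]
  have c3' : ∀ z : A, y₁ * (x₂ * z) = x₂ * (y₁ * z) := fun z => by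
    rw [← mul_assoc, c3, mul_assoc]
  have c4' : ∀ z : A, y₁ * (y₂ * z) = y₂ * (y₁ * z) := fun z => by
    rw [← mul_assoc, c4, mul_assoc]
  ext i j
  fin_cases i <;> fin_cases j <;>
    simp [Matrix.mul_apply, Fin.sum_univ_two] <;>
    · noncomm_ring
      simp only [h1, h2, c1, c2, c3, c4, h1', h2', c1', c2', c3', c4', mul_one, one_mul]
      abel
end

section
/- In S₂ = K⟨x₁,y₁,x₂,y₂ | y₁x₁=1, y₂x₂=1, cross-commutation⟩ with e₁ := 1-x₁y₁ and e₂ := 1-x₂y₂, the matrix product [[x₂,e₂],[0,y₂]] · [[1+(y₂-1)x₁y₁,0],[e₂y₁,x₂]] equals [[θ₁₂,0],[0,1]], where θ₁₂ := (1+(y₁-1)e₂)(1+(x₂-1)e₁). -/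
set_option maxHeartbeats 2000000 in
/-- In `M₂(S₂)` with `e₁ = 1 - x₁y₁`, `e₂ = 1 - x₂y₂`:
`[[x₂,e₂],[0,y₂]] · [[1+(y₂-1)x₁y₁,0],[e₂y₁,x₂]] = [[θ₁₂,0],[0,1]]`, where
`θ₁₂ = (1+(y₁-1)e₂)(1+(x₂-1)e₁)`. -/
theorem theta12_matrix_identity_S2 {K A : Type*} [Field K] [Ring A] [Algebra K A]
    (x₁ y₁ x₂ y₂ : A) (h1 : y₁ * x₁ = 1) (h2 : y₂ * x₂ = 1)
    (c1 : x₁ * x₂ = x₂ * x₁) (c2 : x₁ * y₂ = y₂ * x₁)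
    (c3 : y₁ * x₂ = x₂ * y₁) (c4 : y₁ * y₂ = y₂ * y₁) :
    (!![x₂, 1 - x₂ * y₂; 0, y₂] * !![1 + (y₂ - 1) * x₁ * y₁, 0; (1 - x₂ * y₂) * y₁, x₂]
      : Matrix (Fin 2) (Fin 2) A) =
    !![(1 + (y₁ - 1) * (1 - x₂ * y₂)) * (1 + (x₂ - 1) * (1 - x₁ * y₁)), 0; 0, 1] := by
  have hA : ∀ z : A, y₂ * (x₂ * z) = z := fun z => by rw [← mul_assoc, h2, one_mul]
  have hB : ∀ z : A, y₁ * (x₁ * z) = z := fun z => by rw [← mul_assoc, h1, one_mul]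
  have s1 : ∀ z : A, x₂ * (x₁ * z) = x₁ * (x₂ * z) := fun z => by
    rw [← mul_assoc, ← c1, mul_assoc]
  have s2 : ∀ z : A, x₂ * (y₁ * z) = y₁ * (x₂ * z) := fun z => by
    rw [← mul_assoc, ← c3, mul_assoc]
  have s3 : ∀ z : A, y₂ * (x₁ * z) = x₁ * (y₂ * z) := fun z => by
    rw [← mul_assoc, ← c2, mul_assoc]
  have s4 : ∀ z : A, y₂ * (y₁ * z) = y₁ * (y₂ * z) := fun z => by
    rw [← mul_assoc, ← c4, mul_assoc]
  have e00 : x₂ * (1 + (y₂ - 1) * x₁ * y₁) + (1 - x₂ * y₂) * ((1 - x₂ * y₂) * y₁) =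
      (1 + (y₁ - 1) * (1 - x₂ * y₂)) * (1 + (x₂ - 1) * (1 - x₁ * y₁)) := by
    simp only [mul_add, add_mul, mul_sub, sub_mul, mul_one, one_mul, mul_assoc,
      h1, h2, hA, hB, s1, s2, s3, s4, c1.symm, c2.symm, c3.symm, c4.symm]
    abel
  have e01 : (1 - x₂ * y₂) * x₂ = 0 := by
    rw [sub_mul, one_mul, mul_assoc, h2, mul_one, sub_self]
  have e10 : y₂ * ((1 - x₂ * y₂) * y₁) = 0 := by
    rw [← mul_assoc, mul_sub, mul_one, ← mul_assoc, h2, one_mul, sub_self, zero_mul]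
  ext i j
  fin_cases i <;> fin_cases j <;>
    simp [Matrix.mul_apply, Fin.sum_univ_two, e00, e01, e10, h2]
end

section
/- In S₂ = K⟨x₁,y₁,x₂,y₂ | y₁x₁=1, y₂x₂=1, cross-commutation⟩, the element θ₁₂ := (1+(y₁-1)e₂)(1+(x₂-1)e₁) is a unit with inverse θ₂₁ := (1+(y₂-1)e₁)(1+(x₁-1)e₂), where e_i := 1 - x_i y_i. -/
private lemma key2 {A : Type*} [Ring A] (x y e : A) (he : e * e = e)
    (hye : y * e = e * y) :
    (1 + (x - 1) * e) * (1 + (y - 1) * e) = 1 + (x * y - 1) * e := by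
  have h : e * ((y - 1) * e) = (y - 1) * e := by
    calc e * ((y - 1) * e) = (e * y) * e - e * e := by noncomm_ring
    _ = y * (e * e) - e * e := by rw [← hye]; noncomm_ring
    _ = (y - 1) * e := by rw [he]; noncomm_ring
  calc (1 + (x - 1) * e) * (1 + (y - 1) * e)
      = 1 + (x - 1) * e + (y - 1) * e + (x - 1) * (e * ((y - 1) * e)) := by noncomm_ring
  _ = 1 + (x - 1) * e + (y - 1) * e + (x - 1) * ((y - 1) * e) := by rw [h]
  _ = 1 + (x * y - 1) * e := by noncomm_ring

/-- In `S₂ = K⟨x₁,y₁,x₂,y₂ | y₁x₁ = 1, y₂x₂ = 1, cross-commutation⟩` with `eᵢ = 1 - xᵢyᵢ`,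
the element `θ₁₂ = (1+(y₁-1)e₂)(1+(x₂-1)e₁)` is a unit with inverse
`θ₂₁ = (1+(y₂-1)e₁)(1+(x₁-1)e₂)`. -/
theorem theta12_unit_S2 {K A : Type*} [Field K] [Ring A] [Algebra K A]
    (x₁ y₁ x₂ y₂ : A) (h1 : y₁ * x₁ = 1) (h2 : y₂ * x₂ = 1)
    (c1 : x₁ * x₂ = x₂ * x₁) (c2 : x₁ * y₂ = y₂ * x₁)
    (c3 : y₁ * x₂ = x₂ * y₁) (c4 : y₁ * y₂ = y₂ * y₁) :
    ((1 + (y₁ - 1) * (1 - x₂ * y₂)) * (1 + (x₂ - 1) * (1 - x₁ * y₁))) *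
      ((1 + (y₂ - 1) * (1 - x₁ * y₁)) * (1 + (x₁ - 1) * (1 - x₂ * y₂))) = 1 ∧
    ((1 + (y₂ - 1) * (1 - x₁ * y₁)) * (1 + (x₁ - 1) * (1 - x₂ * y₂))) *
      ((1 + (y₁ - 1) * (1 - x₂ * y₂)) * (1 + (x₂ - 1) * (1 - x₁ * y₁))) = 1 := by
  set E₁ : A := 1 - x₁ * y₁ with hE₁
  set E₂ : A := 1 - x₂ * y₂ with hE₂
  -- idempotency
  have iE₁ : E₁ * E₁ = E₁ := by
    rw [hE₁]
    calc (1 - x₁ * y₁) * (1 - x₁ * y₁)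
        = 1 - x₁ * y₁ - x₁ * y₁ + x₁ * (y₁ * x₁) * y₁ := by noncomm_ring
    _ = 1 - x₁ * y₁ := by rw [h1]; noncomm_ring
  have iE₂ : E₂ * E₂ = E₂ := by
    rw [hE₂]
    calc (1 - x₂ * y₂) * (1 - x₂ * y₂)
        = 1 - x₂ * y₂ - x₂ * y₂ + x₂ * (y₂ * x₂) * y₂ := by noncomm_ring
    _ = 1 - x₂ * y₂ := by rw [h2]; noncomm_ring
  -- annihilation
  have a1 : y₁ * E₁ = 0 := by
    rw [hE₁]
    calc y₁ * (1 - x₁ * y₁) = y₁ - (y₁ * x₁) * y₁ := by noncomm_ring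
    _ = 0 := by rw [h1]; noncomm_ring
  have a2 : y₂ * E₂ = 0 := by
    rw [hE₂]
    calc y₂ * (1 - x₂ * y₂) = y₂ - (y₂ * x₂) * y₂ := by noncomm_ring
    _ = 0 := by rw [h2]; noncomm_ring
  -- cross commutation with the idempotents
  have cx1E2 : x₁ * E₂ = E₂ * x₁ := by
    rw [hE₂]
    calc x₁ * (1 - x₂ * y₂) = x₁ - (x₁ * x₂) * y₂ := by noncomm_ring
    _ = x₁ - x₂ * (x₁ * y₂) := by rw [c1]; noncomm_ring
    _ = x₁ - x₂ * (y₂ * x₁) := by rw [c2]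
    _ = (1 - x₂ * y₂) * x₁ := by noncomm_ring
  have cy1E2 : y₁ * E₂ = E₂ * y₁ := by
    rw [hE₂]
    calc y₁ * (1 - x₂ * y₂) = y₁ - (y₁ * x₂) * y₂ := by noncomm_ring
    _ = y₁ - x₂ * (y₁ * y₂) := by rw [c3]; noncomm_ring
    _ = y₁ - x₂ * (y₂ * y₁) := by rw [c4]
    _ = (1 - x₂ * y₂) * y₁ := by noncomm_ring
  have cx2E1 : x₂ * E₁ = E₁ * x₂ := by
    rw [hE₁]
    calc x₂ * (1 - x₁ * y₁) = x₂ - (x₂ * x₁) * y₁ := by noncomm_ring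
    _ = x₂ - x₁ * (x₂ * y₁) := by rw [← c1]; noncomm_ring
    _ = x₂ - x₁ * (y₁ * x₂) := by rw [← c3]
    _ = (1 - x₁ * y₁) * x₂ := by noncomm_ring
  have cy2E1 : y₂ * E₁ = E₁ * y₂ := by
    rw [hE₁]
    calc y₂ * (1 - x₁ * y₁) = y₂ - (y₂ * x₁) * y₁ := by noncomm_ring
    _ = y₂ - x₁ * (y₂ * y₁) := by rw [← c2]; noncomm_ring
    _ = y₂ - x₁ * (y₁ * y₂) := by rw [← c4]
    _ = (1 - x₁ * y₁) * y₂ := by noncomm_ring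
  -- abbreviations for the four factors
  set P : A := 1 + (y₁ - 1) * E₂ with hP
  set Q : A := 1 + (x₁ - 1) * E₂ with hQ
  set R : A := 1 + (x₂ - 1) * E₁ with hR
  set S : A := 1 + (y₂ - 1) * E₁ with hS
  have hPQ : P * Q = 1 := by
    rw [hP, hQ, key2 y₁ x₁ E₂ iE₂ cx1E2, h1]; noncomm_ring
  have hSR : S * R = 1 := by
    rw [hS, hR, key2 y₂ x₂ E₁ iE₁ cx2E1, h2]; noncomm_ring
  have hRS : R * S = 1 - E₂ * E₁ := by
    rw [hR, hS, key2 x₂ y₂ E₁ iE₁ cy2E1, hE₂]; noncomm_ring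
  have hQP : Q * P = 1 - E₁ * E₂ := by
    rw [hQ, hP, key2 x₁ y₁ E₂ iE₂ cy1E2, hE₁]; noncomm_ring
  have hPE₂ : P * E₂ = E₂ * y₁ := by
    calc P * E₂ = E₂ + (y₁ - 1) * (E₂ * E₂) := by rw [hP]; noncomm_ring
    _ = y₁ * E₂ := by rw [iE₂]; noncomm_ring
    _ = E₂ * y₁ := cy1E2
  have hSE₁ : S * E₁ = E₁ * y₂ := by
    calc S * E₁ = E₁ + (y₂ - 1) * (E₁ * E₁) := by rw [hS]; noncomm_ring
    _ = y₂ * E₁ := by rw [iE₁]; noncomm_ring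
    _ = E₁ * y₂ := cy2E1
  constructor
  · calc (P * R) * (S * Q) = P * (R * S) * Q := by noncomm_ring
    _ = P * (1 - E₂ * E₁) * Q := by rw [hRS]
    _ = P * Q - ((P * E₂) * E₁) * Q := by noncomm_ring
    _ = P * Q - (E₂ * (y₁ * E₁)) * Q := by rw [hPE₂]; noncomm_ring
    _ = P * Q := by rw [a1]; noncomm_ring
    _ = 1 := hPQ
  · calc (S * Q) * (P * R) = S * (Q * P) * R := by noncomm_ring
    _ = S * (1 - E₁ * E₂) * R := by rw [hQP]
    _ = S * R - ((S * E₁) * E₂) * R := by noncomm_ring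
    _ = S * R - (E₁ * (y₂ * E₂)) * R := by rw [hSE₁]; noncomm_ring
    _ = S * R := by rw [a2]; noncomm_ring
    _ = 1 := hSR
end
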